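/- arXiv:2009.10391 — 3 statements merged into one kernel-verified Lean document; each statement's English description precedes it below -/
import Mathlib

section
/- Let g be a real Lie algebra, h ⊆ g a Lie subalgebra, and h^⊥ = {f ∈ g* : f(h) = 0}. Let r be the minimum over f ∈ h^⊥ of dim g_f, where g_f is the stabilizer of f under the coadjoint action. Then for every f₀ ∈ h^⊥ with dim g_{f₀} = r, one has [g_{f₀}, g_{f₀}] ⊆ h ∩ g_{f₀}. -/
/-- The stabilizer `g_f = {Y ∈ g : ∀ Z, f [Y,Z] = 0}` of a linear functional `f`
under the coadjoint action of a real Lie algebra `g`. -/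
def coadjointStabilizer (g : Type*) [LieRing g] [LieAlgebra ℝ g]
    (f : Module.Dual ℝ g) : Submodule ℝ g where
  carrier := {Y : g | ∀ Z : g, f ⁅Y, Z⁆ = 0}
  add_mem' := by intro a b ha hb Z; rw [add_lie, map_add, ha, hb, add_zero]
  zero_mem' := by intro Z; rw [zero_lie, map_zero]
  smul_mem' := by intro c a ha Z; rw [smul_lie, map_smul, ha, smul_zero]

section Aux

variable {g : Type*} [LieRing g] [LieAlgebra ℝ g]

/-- The linear map `X ↦ f ⁅X, ·⁆` associated to `f`. -/
def coadB (f : Module.Dual ℝ g) : g →ₗ[ℝ] Module.Dual ℝ g where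
  toFun X :=
    { toFun := fun W => f ⁅X, W⁆
      map_add' := fun a b => by simp [lie_add]
      map_smul' := fun c a => by simp [lie_smul] }
  map_add' a b := by ext W; simp [add_lie]
  map_smul' c a := by ext W; simp [smul_lie]

lemma coadB_apply (f : Module.Dual ℝ g) (X W : g) : coadB f X W = f ⁅X, W⁆ := rfl

lemma mem_coadjointStabilizer {f : Module.Dual ℝ g} {X : g} :
    X ∈ coadjointStabilizer g f ↔ ∀ W : g, f ⁅X, W⁆ = 0 := Iff.rfl

lemma ker_coadB (f : Module.Dual ℝ g) :
    LinearMap.ker (coadB f) = coadjointStabilizer g f := by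
  ext X
  simp only [LinearMap.mem_ker, mem_coadjointStabilizer]
  constructor
  · intro hX W
    rw [← coadB_apply, hX]; rfl
  · intro hX
    ext W
    simpa [coadB_apply] using hX W

end Aux

/-- Let `g` be a finite-dimensional real Lie algebra, `h ⊆ g` a subalgebra and
`h^⊥ = {f ∈ g* : f(h) = 0}`.  If `f₀ ∈ h^⊥` has coadjoint stabilizer of minimal
dimension among all `f ∈ h^⊥`, then `[g_{f₀}, g_{f₀}] ⊆ h ∩ g_{f₀}`. -/
theorem coadjoint_minimal_stabilizer_bracket_mem
    {g : Type*} [LieRing g] [LieAlgebra ℝ g] [FiniteDimensional ℝ g]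
    (h : LieSubalgebra ℝ g) (f₀ : Module.Dual ℝ g)
    (hf₀ : ∀ Y ∈ h, f₀ Y = 0)
    (hmin : ∀ f : Module.Dual ℝ g, (∀ Y ∈ h, f Y = 0) →
      Module.finrank ℝ (coadjointStabilizer g f₀) ≤ Module.finrank ℝ (coadjointStabilizer g f)) :
    ∀ Y ∈ coadjointStabilizer g f₀, ∀ Z ∈ coadjointStabilizer g f₀,
      ⁅Y, Z⁆ ∈ h ∧ ⁅Y, Z⁆ ∈ coadjointStabilizer g f₀ := by
  intro Y hY Z hZ
  rw [mem_coadjointStabilizer] at hY hZ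
  have hstab : ⁅Y, Z⁆ ∈ coadjointStabilizer g f₀ := by
    rw [mem_coadjointStabilizer]
    intro W
    rw [lie_lie, map_sub, hY, hZ, sub_zero]
  refine ⟨?_, hstab⟩
  -- suppose not; find a separating functional φ
  by_contra hnot
  have hnot' : ⁅Y, Z⁆ ∉ h.toSubmodule := hnot
  obtain ⟨φ, hφann, hφne⟩ :
      ∃ φ : Module.Dual ℝ g, φ ∈ h.toSubmodule.dualAnnihilator ∧ φ ⁅Y, Z⁆ ≠ 0 := by
    by_contra hc
    push_neg at hc
    exact hnot' ((Subspace.forall_mem_dualAnnihilator_apply_eq_zero_iff h.toSubmodule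
      ⁅Y, Z⁆).mp hc)
  rw [Submodule.mem_dualAnnihilator] at hφann
  set c : ℝ := φ ⁅Y, Z⁆ with hc
  -- complement U of the stabilizer
  obtain ⟨U, hU⟩ := Submodule.exists_isCompl (coadjointStabilizer g f₀)
  set n : ℕ := Module.finrank ℝ U with hn
  have u : Module.Basis (Fin n) ℝ U := Module.finBasisOfFinrankEq ℝ U rfl
  set yv : Fin 2 → g := ![Y, Z] with hyv
  -- blocks of the Gram matrix
  set A₀ : Matrix (Fin n) (Fin n) ℝ := Matrix.of fun i j => f₀ ⁅(u i : g), (u j : g)⁆ with hA₀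
  set C₁₁ : Matrix (Fin n) (Fin n) ℝ := Matrix.of fun i j => φ ⁅(u i : g), (u j : g)⁆ with hC₁₁
  set C₁₂ : Matrix (Fin n) (Fin 2) ℝ := Matrix.of fun i k => φ ⁅(u i : g), yv k⁆ with hC₁₂
  set C₂₁ : Matrix (Fin 2) (Fin n) ℝ := Matrix.of fun k j => φ ⁅yv k, (u j : g)⁆ with hC₂₁
  set J : Matrix (Fin 2) (Fin 2) ℝ := Matrix.of fun k l => φ ⁅yv k, yv l⁆ with hJ
  set G : ℝ → Matrix (Fin n ⊕ Fin 2) (Fin n ⊕ Fin 2) ℝ :=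
    fun ε => Matrix.fromBlocks (A₀ + ε ^ 2 • C₁₁) (ε • C₁₂) (ε • C₂₁) J with hG
  -- A₀ is invertible
  have hyvstab : ∀ (k : Fin 2) (W : g), f₀ ⁅yv k, W⁆ = 0 := by
    intro k W
    fin_cases k
    · exact hY W
    · exact hZ W
  have hA₀det : A₀.det ≠ 0 := by
    intro hdet
    obtain ⟨v, hv0, hv⟩ := Matrix.exists_vecMul_eq_zero_iff.mpr hdet
    set x : U := ∑ i, v i • u i with hx
    have hx1 : ∀ j, coadB f₀ (x : g) ((u j : U) : g) = 0 := by
      intro j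
      have hvj := congrFun hv j
      simp only [Matrix.vecMul, dotProduct, hA₀, Matrix.of_apply,
        Pi.zero_apply] at hvj
      have hcoe : ((x : U) : g) = ∑ i, v i • ((u i : U) : g) := by
        rw [hx]; push_cast; rfl
      rw [hcoe, map_sum]
      simp only [map_smul, LinearMap.sum_apply, LinearMap.smul_apply, coadB_apply,
        smul_eq_mul]
      exact hvj
    have hxstab : (x : g) ∈ coadjointStabilizer g f₀ := by
      have hbasis : (coadB f₀ (x : g)).comp U.subtype = 0 := by
        apply u.ext
        intro i
        simpa using hx1 i
      rw [← ker_coadB, LinearMap.mem_ker]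
      ext W
      have hWtop : W ∈ (coadjointStabilizer g f₀) ⊔ U := by
        rw [hU.sup_eq_top]; trivial
      obtain ⟨p, hp, q, hq, rfl⟩ := Submodule.mem_sup.mp hWtop
      have h1 : coadB f₀ (x : g) p = 0 := by
        rw [coadB_apply, ← lie_skew, map_neg, (mem_coadjointStabilizer.mp hp) _, neg_zero]
      have h2 : coadB f₀ (x : g) q = 0 := by
        have := LinearMap.ext_iff.mp hbasis ⟨q, hq⟩
        simpa using this
      simp [map_add, h1, h2]
    have hx0 : (x : g) = 0 :=
      Submodule.disjoint_def.mp hU.disjoint _ hxstab x.2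
    have hxz : x = 0 := Subtype.ext hx0
    have := Fintype.linearIndependent_iff.mp u.linearIndependent v (by rw [← hx, hxz])
    exact hv0 (funext this)
  -- det of J
  have hJdet : J.det ≠ 0 := by
    have h00 : J 0 0 = 0 := by simp [hJ, hyv]
    have h11 : J 1 1 = 0 := by simp [hJ, hyv]
    have h01 : J 0 1 = c := by simp [hJ, hyv, hc]
    have h10 : J 1 0 = -c := by
      show φ ⁅Z, Y⁆ = -c
      rw [← lie_skew, map_neg, hc]
    rw [Matrix.det_fin_two, h00, h11, h01, h10]
    simpa using mul_ne_zero hφne hφne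
  -- det at ε = 0
  have hG0 : (G 0).det ≠ 0 := by
    have : G 0 = Matrix.fromBlocks A₀ 0 0 J := by
      simp [hG]
    rw [this, Matrix.det_fromBlocks_zero₂₁]
    exact mul_ne_zero hA₀det hJdet
  -- continuity of det ∘ G, find ε ≠ 0 with (G ε).det ≠ 0
  obtain ⟨ε, hεdet, hεne⟩ : ∃ ε : ℝ, (G ε).det ≠ 0 ∧ ε ≠ 0 := by
    have hcont : Continuous fun ε : ℝ => (G ε).det := by
      apply Continuous.matrix_det
      apply continuous_matrix
      intro i j
      cases i <;> cases j <;>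
        · simp only [hG, Matrix.fromBlocks_apply₁₁, Matrix.fromBlocks_apply₁₂,
            Matrix.fromBlocks_apply₂₁, Matrix.fromBlocks_apply₂₂, Matrix.add_apply,
            Matrix.smul_apply, smul_eq_mul]
          fun_prop
    have hev : ∀ᶠ ε in nhds (0 : ℝ), (G ε).det ≠ 0 :=
      hcont.continuousAt.eventually_ne hG0
    have hev' : ∀ᶠ ε in nhdsWithin (0 : ℝ) {(0 : ℝ)}ᶜ, (G ε).det ≠ 0 :=
      hev.filter_mono nhdsWithin_le_nhds
    obtain ⟨ε, h1, h2⟩ := (hev'.and (eventually_mem_nhdsWithin)).exists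
    exact ⟨ε, h1, h2⟩
  -- the perturbed functional
  set f₁ : Module.Dual ℝ g := f₀ + ε ^ 2 • φ with hf₁
  have hf₁ann : ∀ X ∈ h, f₁ X = 0 := by
    intro X hX
    simp [hf₁, hf₀ X hX, hφann X hX]
  -- the rescaled family
  set w : Fin n ⊕ Fin 2 → g := Sum.elim (fun i => (u i : g)) (fun k => ε⁻¹ • yv k) with hw
  -- Gram identity
  have happ : ∀ v : g, f₁ v = f₀ v + ε ^ 2 * φ v := fun v => rfl
  have hGram : ∀ i j, coadB f₁ (w i) (w j) = G ε i j := by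
    intro i j
    cases i with
    | inl i =>
      cases j with
      | inl j => rfl
      | inr k =>
        have h0 : f₀ ⁅(u i : g), yv k⁆ = 0 := by
          rw [← lie_skew, map_neg, hyvstab, neg_zero]
        show f₁ ⁅(u i : g), ε⁻¹ • yv k⁆ = ε * φ ⁅(u i : g), yv k⁆
        rw [lie_smul, map_smul, happ, h0, zero_add, smul_eq_mul]
        field_simp
    | inr k =>
      cases j with
      | inl j =>
        have h0 : f₀ ⁅yv k, (u j : g)⁆ = 0 := hyvstab _ _
        show f₁ ⁅ε⁻¹ • yv k, (u j : g)⁆ = ε * φ ⁅yv k, (u j : g)⁆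
        rw [smul_lie, map_smul, happ, h0, zero_add, smul_eq_mul]
        field_simp
      | inr l =>
        have h0 : f₀ ⁅yv k, yv l⁆ = 0 := hyvstab _ _
        show f₁ ⁅ε⁻¹ • yv k, ε⁻¹ • yv l⁆ = φ ⁅yv k, yv l⁆
        rw [smul_lie, lie_smul, map_smul, map_smul, happ, h0, zero_add,
          smul_eq_mul, smul_eq_mul]
        field_simp
  have hrank : n + 2 ≤ Module.finrank ℝ (LinearMap.range (coadB f₁)) := by
    classical
    set L1 : (Fin n ⊕ Fin 2 → ℝ) →ₗ[ℝ] g := Fintype.linearCombination ℝ w with hL1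
    set L2 : Module.Dual ℝ g →ₗ[ℝ] (Fin n ⊕ Fin 2 → ℝ) :=
      LinearMap.pi (fun j => LinearMap.applyₗ (w j)) with hL2
    set ψ : (Fin n ⊕ Fin 2 → ℝ) →ₗ[ℝ] (Fin n ⊕ Fin 2 → ℝ) :=
      L2 ∘ₗ (coadB f₁) ∘ₗ L1 with hψdef
    have hψ : ∀ x j, ψ x j = ∑ i, x i * G ε i j := by
      intro x j
      have hL1x : L1 x = ∑ i, x i • w i := by
        simp [hL1, Fintype.linearCombination_apply]
      have : ψ x j = coadB f₁ (L1 x) (w j) := rfl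
      rw [this, hL1x, map_sum, LinearMap.sum_apply]
      refine Finset.sum_congr rfl fun i _ => ?_
      rw [map_smul, LinearMap.smul_apply, smul_eq_mul, hGram]
    have hψinj : Function.Injective ψ := by
      rw [← LinearMap.ker_eq_bot, LinearMap.ker_eq_bot']
      intro x hxz
      by_contra hxne
      have hvm : Matrix.vecMul x (G ε) = 0 := by
        funext j
        have := congrFun hxz j
        rw [hψ] at this
        simpa [Matrix.vecMul, dotProduct] using this
      exact hεdet (Matrix.exists_vecMul_eq_zero_iff.mp ⟨x, hxne, hvm⟩)
    have h1 : Module.finrank ℝ (LinearMap.range ψ) = n + 2 := by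
      rw [LinearMap.finrank_range_of_inj hψinj]
      simp [Module.finrank_pi]
    have hle : LinearMap.range ψ ≤ (LinearMap.range (coadB f₁)).map L2 := by
      rintro _ ⟨x, rfl⟩
      exact ⟨coadB f₁ (L1 x), ⟨L1 x, rfl⟩, rfl⟩
    calc n + 2 = Module.finrank ℝ (LinearMap.range ψ) := h1.symm
      _ ≤ Module.finrank ℝ ((LinearMap.range (coadB f₁)).map L2) :=
          Submodule.finrank_mono hle
      _ ≤ Module.finrank ℝ (LinearMap.range (coadB f₁)) :=
          Submodule.finrank_map_le _ _
  -- rank bound from minimality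
  have hrank' : Module.finrank ℝ (LinearMap.range (coadB f₁)) ≤ n := by
    have e0 := LinearMap.finrank_range_add_finrank_ker (coadB (g := g) f₀)
    have e1 := LinearMap.finrank_range_add_finrank_ker (coadB (g := g) f₁)
    rw [ker_coadB] at e0 e1
    have emin := hmin f₁ hf₁ann
    have eU : Module.finrank ℝ (coadjointStabilizer g f₀) + n = Module.finrank ℝ g := by
      rw [hn]
      exact Submodule.finrank_add_eq_of_isCompl hU
    omega
  omega
end

section
/- Let g be a complex semisimple Lie algebra, h ⊆ g a Lie subalgebra, h₀ = [h,h], and G the adjoint group. If the closure of the Ad(G)-orbit of h₀ in the Grassmannian contains a solvable Lie subalgebra, then the closure of the Ad(G)-orbit of h also contains a solvable Lie subalgebra. -/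
variable {g : Type*} [LieRing g] [LieAlgebra ℂ g] [FiniteDimensional ℂ g]
  [TopologicalSpace g] [IsTopologicalAddGroup g] [ContinuousSMul ℂ g] [T2Space g]

/-- `r` is a Grassmannian limit of the sequence of subalgebras `s n`: all the `s n` have
the dimension of `r` and every element of `r` is a limit of elements of the `s n`. -/
def IsSubalgebraLimit (s : ℕ → LieSubalgebra ℂ g) (r : LieSubalgebra ℂ g) : Prop :=
  (∀ n, Module.finrank ℂ (s n) = Module.finrank ℂ r) ∧
    ∀ Y ∈ r, ∃ u : ℕ → g, (∀ n, u n ∈ s n) ∧ Filter.Tendsto u Filter.atTop (nhds Y)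

open Filter Topology Module Bornology

/-- The Lie bracket is continuous on a finite-dimensional Hausdorff topological Lie algebra. -/
lemma aux_continuous_bracket : Continuous (fun p : g × g => ⁅p.1, p.2⁆) := by
  classical
  set b := Module.finBasis ℂ g with hb
  letI : LieRing (Module.End ℂ g) := LieRing.ofAssociativeRing
  set A : g →ₗ[ℂ] Module.End ℂ g := (LieAlgebra.ad ℂ g).toLinearMap
    with hA
  have key : ∀ p : g × g, ⁅p.1, p.2⁆ = ∑ i, (b.repr p.1 i) • ((A (b i)) p.2) := by
    intro p
    have h1 : A p.1 = ∑ i, (b.repr p.1 i) • A (b i) := by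
      conv_lhs => rw [← b.sum_repr p.1]
      rw [map_sum]; simp only [map_smul]
    have h2 : ⁅p.1, p.2⁆ = (A p.1) p.2 := rfl
    rw [h2, h1, LinearMap.sum_apply]
    simp [LinearMap.smul_apply]
  rw [funext key]
  refine continuous_finset_sum _ fun i _ => Continuous.smul ?_ ?_
  · exact ((b.coord i).continuous_of_finiteDimensional).comp continuous_fst
  · exact ((A (b i)).continuous_of_finiteDimensional).comp continuous_snd

/-- Key compactness lemma: if every element of a `k`-dimensional subspace `r₀` is a limit of
elements of the `k`-dimensional subspaces `s n`, then any limit (along a subsequence) of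
elements of the `s n` already lies in `r₀`. -/
lemma aux_mem_of_limit {k : ℕ} {s : ℕ → Submodule ℂ g}
    (hs : ∀ n, finrank ℂ (s n) = k)
    {r₀ : Submodule ℂ g} (hr : finrank ℂ r₀ = k)
    (happ : ∀ Y ∈ r₀, ∃ u : ℕ → g, (∀ n, u n ∈ s n) ∧ Tendsto u atTop (nhds Y))
    {σ : ℕ → ℕ} (hσ : StrictMono σ) {v : ℕ → g} (hv : ∀ n, v n ∈ s (σ n))
    {z : g} (hz : Tendsto v atTop (nhds z)) : z ∈ r₀ := by
  classical
  by_contra hzr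
  -- choose a basis of r₀
  set b : Basis (Fin k) ℂ r₀ := (Module.finBasis ℂ r₀).reindex (finCongr hr) with hbdef
  set y : Fin k → g := fun i => (b i : g) with hy
  have hymem : ∀ i, y i ∈ r₀ := fun i => (b i).2
  have hyind : LinearIndependent ℂ y := by
    have := b.linearIndependent.map' r₀.subtype (Submodule.ker_subtype _)
    exact this
  have hyspan : Submodule.span ℂ (Set.range y) = r₀ := by
    have h1 : Set.range y = r₀.subtype '' Set.range ⇑b := by
      ext w; simp [hy, Set.range_comp]
    rw [h1, ← Submodule.map_span, b.span_eq, Submodule.map_top, Submodule.range_subtype]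
  -- approximation sequences for the basis vectors
  choose u hu hulim using fun i => happ (y i) (hymem i)
  -- the `k+1` sequences and their limits
  set w : Fin (k + 1) → ℕ → g :=
    fun j n => (Fin.snoc (fun i : Fin k => u i (σ n)) (v n) : Fin (k + 1) → g) j with hw
  set zl : Fin (k + 1) → g := (Fin.snoc y z : Fin (k + 1) → g) with hzl
  have hwmem : ∀ j n, w j n ∈ s (σ n) := by
    intro j n
    refine Fin.lastCases ?_ (fun i => ?_) j
    · simpa [hw] using hv n
    · simpa [hw] using hu i (σ n)
  have hwlim : ∀ j, Tendsto (fun n => w j n) atTop (nhds (zl j)) := by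
    intro j
    refine Fin.lastCases ?_ (fun i => ?_) j
    · simpa [hw, hzl] using hz
    · simpa [hw, hzl, Function.comp_def] using (hulim i).comp hσ.tendsto_atTop
  have hzlind : LinearIndependent ℂ zl := by
    rw [hzl, linearIndependent_fin_snoc]
    exact ⟨hyind, by rwa [hyspan]⟩
  -- for each n, a nontrivial linear relation between the w j n
  have H : ∀ n, ∃ c : Fin (k + 1) → ℂ, (∑ j, c j • w j n) = 0 ∧ c ≠ 0 := by
    intro n
    set W : Fin (k + 1) → s (σ n) := fun j => ⟨w j n, hwmem j n⟩ with hW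
    have hnli : ¬ LinearIndependent ℂ W := by
      intro hli
      have := hli.fintype_card_le_finrank
      rw [hs (σ n)] at this
      simp at this
    rw [Fintype.not_linearIndependent_iff] at hnli
    obtain ⟨c, hcs, j₀, hj₀⟩ := hnli
    refine ⟨c, ?_, fun hc => hj₀ (by rw [hc]; rfl)⟩
    have := congrArg (Subtype.val) hcs
    simpa [hW] using this
  choose c hc0 hcne using H
  -- normalize in the sup-norm space `Fin (k+1) → ℂ`
  have hcnorm : ∀ n, ‖c n‖ ≠ 0 := fun n => by
    simpa [norm_eq_zero] using hcne n
  set c' : ℕ → (Fin (k + 1) → ℂ) := fun n => (‖c n‖)⁻¹ • c n with hc'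
  have hc'sphere : ∀ n, c' n ∈ Metric.sphere (0 : Fin (k + 1) → ℂ) 1 := by
    intro n
    rw [mem_sphere_zero_iff_norm, hc', norm_smul]
    simp [inv_mul_cancel₀ (hcnorm n)]
  have hc'sum : ∀ n, (∑ j, c' n j • w j n) = 0 := by
    intro n
    rw [hc']
    have : ∑ j, ((‖c n‖)⁻¹ • c n) j • w j n = (‖c n‖)⁻¹ • ∑ j, c n j • w j n := by
      rw [Finset.smul_sum]
      refine Finset.sum_congr rfl fun j _ => ?_
      simp [smul_smul, ← smul_assoc, Complex.real_smul]
    rw [this, hc0, smul_zero]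
  -- extract a convergent subsequence of the normalized coefficients
  obtain ⟨cl, hclmem, τ, hτ, hτlim⟩ :=
    tendsto_subseq_of_bounded (Metric.isBounded_sphere
      (x := (0 : Fin (k + 1) → ℂ)) (r := 1)) hc'sphere
  rw [Metric.isClosed_sphere.closure_eq, mem_sphere_zero_iff_norm] at hclmem
  -- pass to the limit in the linear relation
  have hlim1 : Tendsto (fun n => ∑ j, c' (τ n) j • w j (τ n)) atTop
      (nhds (∑ j, cl j • zl j)) := by
    refine tendsto_finset_sum _ fun j _ => Tendsto.smul ?_ ?_
    · exact ((continuous_apply j).tendsto cl).comp hτlim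
    · exact (hwlim j).comp hτ.tendsto_atTop
  have hlim2 : Tendsto (fun n => ∑ j, c' (τ n) j • w j (τ n)) atTop (nhds 0) := by
    simpa [hc'sum] using (tendsto_const_nhds :
      Tendsto (fun _ : ℕ => (0 : g)) atTop (nhds 0))
  have hrel : (∑ j, cl j • zl j) = 0 := tendsto_nhds_unique hlim1 hlim2
  have : ∀ j, cl j = 0 := Fintype.linearIndependent_iff.mp hzlind cl hrel
  have : cl = 0 := funext this
  rw [this] at hclmem
  simp at hclmem

/-- If `r₀ ≤ r` are Lie subalgebras with `⁅r, r⁆ ⊆ r₀` and `r₀` is solvable, then `r` is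
solvable. -/
lemma aux_solvable_of_bracket_le (r₀ r : LieSubalgebra ℂ g) (hle : r₀ ≤ r)
    (hbr : ∀ x ∈ r, ∀ y ∈ r, ⁅x, y⁆ ∈ r₀)
    (hsolv : LieAlgebra.IsSolvable r₀) : LieAlgebra.IsSolvable r := by
  -- `r₀` as an ideal of `r`
  set I : LieIdeal ℂ r :=
    { carrier := {x : r | (x : g) ∈ r₀}
      add_mem' := fun hx hy => r₀.add_mem hx hy
      zero_mem' := r₀.zero_mem
      smul_mem' := fun t x hx => r₀.smul_mem t hx
      lie_mem := fun {x m} hm => hbr x x.2 m m.2 } with hI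
  -- `I` is solvable, being isomorphic to a subalgebra of `r₀`
  have hIsolv : LieAlgebra.IsSolvable I := by
    let f : I →ₗ⁅ℂ⁆ r₀ :=
      { toFun := fun x => ⟨((x : r) : g), x.2⟩
        map_add' := fun x y => by ext; simp
        map_smul' := fun t x => by ext; rfl
        map_lie' := fun {x y} => by ext; simp }
    have hinj : Function.Injective f := by
      intro x y hxy
      have h2 := congrArg (Subtype.val) hxy
      exact Subtype.ext (Subtype.ext h2)
    exact hinj.lieAlgebra_isSolvable
  obtain ⟨k, hk⟩ := LieAlgebra.IsSolvable.solvable ℂ I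
  have hIbot : LieAlgebra.derivedSeriesOfIdeal ℂ r k I = ⊥ :=
    (LieIdeal.derivedSeries_eq_bot_iff I k).mp hk
  have h1 : LieAlgebra.derivedSeries ℂ r 1 ≤ I := by
    rw [LieAlgebra.derivedSeries_def, LieAlgebra.derivedSeriesOfIdeal_succ,
      LieAlgebra.derivedSeriesOfIdeal_zero]
    rw [LieSubmodule.lie_le_iff]
    intro x _ m _
    exact hbr x x.2 m m.2
  refine LieAlgebra.IsSolvable.mk (R := ℂ) (k := k + 1) ?_
  have : LieAlgebra.derivedSeries ℂ r (k + 1) =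
      LieAlgebra.derivedSeriesOfIdeal ℂ r k (LieAlgebra.derivedSeries ℂ r 1) := by
    rw [LieAlgebra.derivedSeries_def, LieAlgebra.derivedSeriesOfIdeal_add]
  rw [this]
  rw [← le_bot_iff, ← hIbot]
  exact LieAlgebra.derivedSeriesOfIdeal_mono h1 k

/-- Let `g` be a complex semisimple Lie algebra, `h ⊆ g` a Lie subalgebra and
`h₀ = [h,h]` its derived subalgebra.  If the closure of the orbit of `h₀` under the
adjoint group (a sequence of automorphisms `φ n`) contains a solvable Lie subalgebra,
then the closure of the orbit of `h` also contains a solvable Lie subalgebra. -/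
theorem orbit_closure_solvable_of_derived
    [LieAlgebra.IsSemisimple ℂ g]
    (h h₀ : LieSubalgebra ℂ g)
    (hh₀ : h₀.toSubmodule = Submodule.span ℂ {z : g | ∃ x ∈ h, ∃ y ∈ h, z = ⁅x, y⁆})
    (hyp : ∃ (φ : ℕ → (g ≃ₗ⁅ℂ⁆ g)) (r₀ : LieSubalgebra ℂ g),
      IsSubalgebraLimit (fun n => h₀.map (φ n).toLieHom) r₀ ∧ LieAlgebra.IsSolvable r₀) :
    ∃ (ψ : ℕ → (g ≃ₗ⁅ℂ⁆ g)) (r : LieSubalgebra ℂ g),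
      IsSubalgebraLimit (fun n => h.map (ψ n).toLieHom) r ∧ LieAlgebra.IsSolvable r := by
  classical
  obtain ⟨φ, r₀, ⟨hdim₀, happ₀⟩, hsolv₀⟩ := hyp
  -- h₀ is contained in h
  have h₀le : (h₀ : Submodule ℂ g) ≤ (h : Submodule ℂ g) := by
    rw [hh₀]
    refine Submodule.span_le.mpr ?_
    rintro z ⟨a, ha, b, hb, rfl⟩
    exact h.lie_mem ha hb
  set k : ℕ := finrank ℂ h with hk
  set k₀ : ℕ := finrank ℂ r₀ with hk₀
  -- submodule versions of the orbit sequences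
  set S : ℕ → Submodule ℂ g :=
    fun n => (h.map (φ n).toLieHom : Submodule ℂ g) with hSdef
  set S₀ : ℕ → Submodule ℂ g :=
    fun n => (h₀.map (φ n).toLieHom : Submodule ℂ g) with hS₀def
  have hSdim : ∀ n, finrank ℂ (S n) = k := by
    intro n
    have h1 : S n = (h : Submodule ℂ g).map ((φ n).toLinearEquiv : g →ₗ[ℂ] g) := rfl
    rw [h1, LinearEquiv.finrank_map_eq]
    rfl
  have hS₀dim : ∀ n, finrank ℂ (S₀ n) = k₀ := fun n => hdim₀ n
  have happ₀' : ∀ Y ∈ (r₀ : Submodule ℂ g), ∃ u : ℕ → g,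
      (∀ n, u n ∈ S₀ n) ∧ Tendsto u atTop (nhds Y) := fun Y hY => happ₀ Y hY
  -- the model Euclidean space
  set d : ℕ := finrank ℂ g with hd
  let E := EuclideanSpace ℂ (Fin d)
  haveI : ProperSpace E := FiniteDimensional.proper ℂ E
  let eL : g ≃L[ℂ] E :=
    (Module.finBasis ℂ g).equivFun.toContinuousLinearEquiv.trans
      (EuclideanSpace.equiv (Fin d) ℂ).symm
  set W : ℕ → Submodule ℂ E := fun n => (S n).map (eL.toLinearEquiv : g →ₗ[ℂ] E) with hW
  have hWdim : ∀ n, finrank ℂ (W n) = k := by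
    intro n; rw [hW]; rw [LinearEquiv.finrank_map_eq]; exact hSdim n
  -- orthonormal bases of the images
  let B : ∀ n, OrthonormalBasis (Fin k) ℂ (W n) :=
    fun n => (stdOrthonormalBasis ℂ (W n)).reindex (finCongr (hWdim n))
  set V : ℕ → Fin k → E := fun n i => ((B n i : W n) : E) with hV
  have hVW : ∀ n i, V n i ∈ W n := fun n i => (B n i).2
  have hVnorm : ∀ n, V n ∈ Metric.closedBall (0 : Fin k → E) 1 := by
    intro n
    rw [Metric.mem_closedBall, dist_zero_right]
    refine pi_norm_le_iff_of_nonneg zero_le_one |>.mpr fun i => ?_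
    have := (B n).orthonormal.1 i
    rw [hV]
    rw [← Submodule.norm_coe] at this
    rw [this]
  -- extract a convergent subsequence of orthonormal frames
  obtain ⟨C, _, σ, hσ, hσlim⟩ :=
    tendsto_subseq_of_bounded (Metric.isBounded_closedBall
      (x := (0 : Fin k → E)) (r := 1)) hVnorm
  have hVClim : ∀ i, Tendsto (fun n => V (σ n) i) atTop (nhds (C i)) :=
    fun i => ((continuous_apply i).tendsto C).comp hσlim
  -- the limit frame is orthonormal
  have hCon : Orthonormal ℂ C := by
    rw [orthonormal_iff_ite]
    intro i j
    have h1 : Tendsto (fun n => (inner ℂ (V (σ n) i) (V (σ n) j) : ℂ)) atTop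
        (nhds (inner ℂ (C i) (C j))) := Tendsto.inner (hVClim i) (hVClim j)
    have h2 : ∀ n, (inner ℂ (V (σ n) i) (V (σ n) j) : ℂ) = if i = j then (1 : ℂ) else 0 := by
      intro n
      simpa using orthonormal_iff_ite.mp (B (σ n)).orthonormal i j
    rw [funext h2] at h1
    exact tendsto_nhds_unique h1 tendsto_const_nhds
  have hCind : LinearIndependent ℂ C := hCon.linearIndependent
  -- pull back to g
  set c : Fin k → g := fun i => eL.symm (C i) with hc
  have hcind : LinearIndependent ℂ c := by
    have := hCind.map' (eL.symm.toLinearEquiv : E →ₗ[ℂ] g)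
      (LinearEquiv.ker eL.symm.toLinearEquiv)
    exact this
  have hclim : ∀ i, Tendsto (fun n => eL.symm (V (σ n) i)) atTop (nhds (c i)) :=
    fun i => (eL.symm.continuous.tendsto (C i)).comp (hVClim i)
  set rsub : Submodule ℂ g := Submodule.span ℂ (Set.range c) with hrsub
  have hrdim : finrank ℂ rsub = k := by
    rw [hrsub, finrank_span_eq_card hcind, Fintype.card_fin]
  -- membership transfer from W back to S
  have hWS : ∀ n i, eL.symm (V n i) ∈ S n := by
    intro n i
    obtain ⟨x, hx, hxe⟩ := (hVW n i)
    rw [← hxe]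
    have h4 : eL.symm ((eL.toLinearEquiv : g →ₗ[ℂ] E) x) = x := eL.symm_apply_apply x
    rw [h4]
    exact hx
  -- approximation property for rsub along the subsequence
  have happrox : ∀ Y ∈ rsub, ∃ u : ℕ → g,
      (∀ n, u n ∈ S (σ n)) ∧ Tendsto u atTop (nhds Y) := by
    intro Y hY
    rw [hrsub, Submodule.mem_span_range_iff_exists_fun] at hY
    obtain ⟨a, ha⟩ := hY
    refine ⟨fun n => ∑ i, a i • eL.symm (V (σ n) i), fun n =>
      Submodule.sum_mem _ fun i _ => Submodule.smul_mem _ _ (hWS (σ n) i), ?_⟩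
    have h5 : Tendsto (fun n => ∑ i, a i • eL.symm (V (σ n) i)) atTop
        (nhds (∑ i, a i • c i)) :=
      tendsto_finset_sum _ fun i _ => tendsto_const_nhds.smul (hclim i)
    rwa [ha] at h5
  -- r₀ is contained in rsub
  have hr₀le : (r₀ : Submodule ℂ g) ≤ rsub := by
    intro Y hY
    obtain ⟨u, hu, hulim⟩ := happ₀' Y hY
    refine aux_mem_of_limit (fun n => hSdim (σ n)) hrdim happrox strictMono_id
      (v := fun n => u (σ n)) (fun n => ?_) (hulim.comp hσ.tendsto_atTop)
    exact Submodule.map_mono h₀le (hu (σ n))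
  -- rsub is closed under brackets, with values in r₀
  have hbr : ∀ X ∈ rsub, ∀ Y ∈ rsub, ⁅X, Y⁆ ∈ (r₀ : Submodule ℂ g) := by
    intro X hX Y hY
    obtain ⟨x, hx, hxlim⟩ := happrox X hX
    obtain ⟨y, hy, hylim⟩ := happrox Y hY
    have hbmem : ∀ n, ⁅x n, y n⁆ ∈ S₀ (σ n) := by
      intro n
      obtain ⟨a, ha, hax⟩ := hx n
      obtain ⟨b, hb, hby⟩ := hy n
      refine ⟨⁅a, b⁆, ?_, ?_⟩
      · show ⁅a, b⁆ ∈ h₀.toSubmodule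
        rw [hh₀]
        exact Submodule.subset_span ⟨a, ha, b, hb, rfl⟩
      · rw [← hax, ← hby]
        exact ((φ (σ n)).toLieHom.map_lie a b)
    have hblim : Tendsto (fun n => ⁅x n, y n⁆) atTop (nhds ⁅X, Y⁆) := by
      have := (aux_continuous_bracket (g := g)).tendsto (X, Y)
      exact this.comp (hxlim.prodMk_nhds hylim)
    exact aux_mem_of_limit hS₀dim rfl happ₀' hσ hbmem hblim
  -- assemble the Lie subalgebra
  set r : LieSubalgebra ℂ g :=
    { rsub with lie_mem' := fun {x y} hx hy => hr₀le (hbr x hx y hy) } with hr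
  have hrsub' : (r : Submodule ℂ g) = rsub := rfl
  refine ⟨fun n => φ (σ n), r, ⟨?_, ?_⟩, ?_⟩
  · intro n
    have h6 : finrank ℂ (h.map (φ (σ n)).toLieHom) = k := hSdim (σ n)
    have h7 : finrank ℂ r = k := hrdim
    rw [h6, h7]
  · intro Y hY
    exact happrox Y hY
  · refine aux_solvable_of_bracket_le r₀ r (fun x hx => hr₀le hx) ?_ hsolv₀
    intro x hx y hy
    exact hbr x hx y hy
end

section
/- Let g₀ = l₀ ⊕ u₀ be a complex algebraic Lie algebra with reductive part l₀ and nilradical u₀, and let h ⊆ g₀ be an ideal of a parabolic with h = s ⊕ v where s = h ∩ l₀ is an ideal of l₀ and v = h ∩ u₀. If h is an ideal of g₀ and ρ_{l₀}(Y) ≤ 2·ρ_{g₀/h}(Y) = 0 for all Y ∈ s, then s is abelian and h is solvable. -/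
open Polynomial

section aux


lemma rhoEnd_aux_nonneg' {V : Type*} [AddCommGroup V] [Module ℂ V] [Module.Finite ℂ V]
    (f : Module.End ℂ V) : 0 ≤ (1 / 2 : ℝ) * ((f.charpoly.roots.map fun z => |z.re|).sum) := by
  have : ∀ x ∈ f.charpoly.roots.map (fun z : ℂ => |z.re|), (0:ℝ) ≤ x := by
    intro x hx
    obtain ⟨z, -, rfl⟩ := Multiset.mem_map.mp hx
    exact abs_nonneg _
  have := Multiset.sum_nonneg this
  linarith

lemma roots_re_zero' {V : Type*} [AddCommGroup V] [Module ℂ V] [Module.Finite ℂ V]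
    (f : Module.End ℂ V) (h : (1 / 2 : ℝ) * ((f.charpoly.roots.map fun z => |z.re|).sum) = 0) :
    ∀ μ ∈ f.charpoly.roots, μ.re = 0 := by
  intro μ hμ
  have hnn : ∀ x ∈ f.charpoly.roots.map (fun z : ℂ => |z.re|), (0:ℝ) ≤ x := by
    intro x hx
    obtain ⟨z, -, rfl⟩ := Multiset.mem_map.mp hx
    exact abs_nonneg _
  have hle := Multiset.single_le_sum hnn |μ.re| (Multiset.mem_map_of_mem _ hμ)
  have hsum : (f.charpoly.roots.map fun z : ℂ => |z.re|).sum = 0 := by linarith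
  rw [hsum] at hle
  exact abs_eq_zero.mp (le_antisymm hle (abs_nonneg _))

lemma isNilpotent_of_roots' {V : Type*} [AddCommGroup V] [Module ℂ V] [Module.Finite ℂ V]
    (f : Module.End ℂ V)
    (h1 : ∀ μ ∈ f.charpoly.roots, μ.re = 0)
    (h2 : ∀ μ ∈ ((Complex.I : ℂ) • f).charpoly.roots, μ.re = 0) :
    IsNilpotent f := by
  have hint : IsIntegral ℂ f := Algebra.IsIntegral.isIntegral (R := ℂ) f
  have hmp0 : minpoly ℂ f ≠ 0 := minpoly.ne_zero hint
  have hev : ∀ μ : ℂ, f.HasEigenvalue μ → μ = 0 := by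
    intro μ hμ
    have hroot : (minpoly ℂ f).IsRoot μ := Module.End.isRoot_of_hasEigenvalue hμ
    have hdvd : minpoly ℂ f ∣ f.charpoly := f.minpoly_dvd_charpoly
    have hre : μ.re = 0 := by
      refine h1 μ ?_
      rw [Polynomial.mem_roots (f.charpoly_monic.ne_zero)]
      exact hroot.dvd hdvd
    have hiμ : ((Complex.I : ℂ) • f).HasEigenvalue (Complex.I * μ) := by
      obtain ⟨v, hv⟩ := hμ.exists_hasEigenvector
      refine Module.End.hasEigenvalue_of_hasEigenvector (x := v) ⟨?_, hv.2⟩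
      rw [Module.End.mem_eigenspace_iff]
      have := hv.apply_eq_smul
      simp [this, smul_smul]
    have him : (Complex.I * μ).re = 0 := by
      refine h2 _ ?_
      have hroot' : (minpoly ℂ ((Complex.I : ℂ) • f)).IsRoot (Complex.I * μ) :=
        Module.End.isRoot_of_hasEigenvalue hiμ
      rw [Polynomial.mem_roots (((Complex.I : ℂ) • f).charpoly_monic.ne_zero)]
      exact hroot'.dvd ((Complex.I • f).minpoly_dvd_charpoly)
    have : μ.im = 0 := by simpa [Complex.mul_re, hre] using him
    exact Complex.ext hre this
  have hmono := minpoly.monic hint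
  have hsplit : (minpoly ℂ f).Splits := IsAlgClosed.splits _
  have heq : minpoly ℂ f = ((minpoly ℂ f).roots.map fun a => X - C a).prod :=
    hsplit.eq_prod_roots_of_monic hmono
  have hroots0 : ∀ a ∈ (minpoly ℂ f).roots, a = 0 := by
    intro a ha
    have hr : (minpoly ℂ f).IsRoot a := (Polynomial.mem_roots hmp0).mp ha
    exact hev a (Module.End.hasEigenvalue_of_isRoot hr)
  have hX : minpoly ℂ f = X ^ Multiset.card (minpoly ℂ f).roots := by
    conv_lhs => rw [heq]
    rw [show ((minpoly ℂ f).roots.map fun a => X - C a)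
        = (minpoly ℂ f).roots.map (fun _ => (X : ℂ[X])) from
      Multiset.map_congr rfl (by intro a ha; rw [hroots0 a ha]; simp)]
    rw [Multiset.map_const', Multiset.prod_replicate]
  refine ⟨Multiset.card (minpoly ℂ f).roots, ?_⟩
  have := minpoly.aeval ℂ f
  rw [hX] at this
  simpa using this

end aux


variable {g₀ : Type*} [LieRing g₀] [LieAlgebra ℂ g₀] [FiniteDimensional ℂ g₀]

/-- `ρ` of an endomorphism of a finite-dimensional complex vector space: half the sum of
the absolute values of the real parts of its eigenvalues. -/
noncomputable def rhoEnd {V : Type*} [AddCommGroup V] [Module ℂ V] [Module.Finite ℂ V]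
    (f : Module.End ℂ V) : ℝ :=
  (1 / 2) * ((f.charpoly.roots.map fun z => |z.re|).sum)

/-- `ρ_k(Y)` for `Y ∈ k`: `ρ` of the adjoint action of `Y` on the subalgebra `k`. -/
noncomputable def rhoSub (k : LieSubalgebra ℂ g₀) (Y : g₀) (hY : Y ∈ k) : ℝ :=
  rhoEnd ((LieAlgebra.ad ℂ g₀ Y).restrict (p := k.toSubmodule) (q := k.toSubmodule)
    fun x hx => by simpa using k.lie_mem hY hx)

/-- `ρ_{g₀/h}(Y)` for `Y ∈ h`: `ρ` of the action of `Y` on the quotient `g₀/h`. -/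
noncomputable def rhoQuot (h : LieSubalgebra ℂ g₀) (Y : g₀) (hY : Y ∈ h) : ℝ :=
  rhoEnd (Submodule.mapQ h.toSubmodule h.toSubmodule (LieAlgebra.ad ℂ g₀ Y)
    fun x hx => by simpa using h.lie_mem hY hx)

/-- Let `g₀ = l₀ ⊕ u₀` be a complex algebraic Lie algebra with reductive part `l₀` and
nilradical `u₀`, and `h = s ⊕ v ⊆ g₀` an ideal of `g₀` with `s = h ∩ l₀` an ideal of `l₀`
and `v = h ∩ u₀`.  If `ρ_{l₀}(Y) ≤ 2 ρ_{g₀/h}(Y) = 0` for all `Y ∈ s`, then `s` is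
abelian and `h` is solvable. -/
theorem ideal_with_vanishing_rho_is_solvable
    (l₀ u₀ h : LieSubalgebra ℂ g₀)
    -- decomposition g₀ = l₀ ⊕ u₀
    (hsum : l₀.toSubmodule ⊔ u₀.toSubmodule = ⊤)
    (hdisj : l₀.toSubmodule ⊓ u₀.toSubmodule = ⊥)
    -- u₀ is the nilradical : a nilpotent ideal of g₀
    (hu₀ideal : ∀ X : g₀, ∀ Y ∈ u₀, ⁅X, Y⁆ ∈ u₀)
    (hu₀nilp : LieRing.IsNilpotent u₀)
    -- l₀ is reductive : its radical is its center
    (hred : LieAlgebra.radical ℂ l₀ = LieAlgebra.center ℂ l₀)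
    -- h is an ideal of g₀
    (hideal : ∀ X : g₀, ∀ Y ∈ h, ⁅X, Y⁆ ∈ h)
    -- s = h ∩ l₀ is an ideal of l₀
    (hsideal : ∀ X ∈ l₀, ∀ Y ∈ h, Y ∈ l₀ → ⁅X, Y⁆ ∈ l₀)
    -- h = s ⊕ v with s = h ∩ l₀ and v = h ∩ u₀
    (hdecomp : h.toSubmodule =
      (h.toSubmodule ⊓ l₀.toSubmodule) ⊔ (h.toSubmodule ⊓ u₀.toSubmodule))
    -- the ρ-inequality ρ_{l₀} ≤ 2 ρ_{g₀/h} = 0 on s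
    (hrho : ∀ Y : g₀, ∀ hYh : Y ∈ h, ∀ hYl : Y ∈ l₀,
      rhoSub l₀ Y hYl ≤ 2 * rhoQuot h Y hYh ∧ rhoQuot h Y hYh = 0) :
    (∀ Y : g₀, Y ∈ h → Y ∈ l₀ → ∀ Z : g₀, Z ∈ h → Z ∈ l₀ → ⁅Y, Z⁆ = 0) ∧
      LieAlgebra.IsSolvable h := by
  -- ρ_{l₀} vanishes on s
  have hrho0 : ∀ Y : g₀, ∀ hYh : Y ∈ h, ∀ hYl : Y ∈ l₀, rhoSub l₀ Y hYl = 0 := by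
    intro Y hYh hYl
    obtain ⟨h1, h2⟩ := hrho Y hYh hYl
    rw [h2, mul_zero] at h1
    exact le_antisymm h1 (rhoEnd_aux_nonneg' _)
  -- for Y ∈ s, the adjoint action of Y on l₀ is nilpotent
  have hnil : ∀ Y : g₀, ∀ hYh : Y ∈ h, ∀ hYl : Y ∈ l₀,
      IsNilpotent ((LieAlgebra.ad ℂ g₀ Y).restrict (p := l₀.toSubmodule) (q := l₀.toSubmodule)
        fun x hx => by simpa using l₀.lie_mem hYl hx) := by
    intro Y hYh hYl
    set f := (LieAlgebra.ad ℂ g₀ Y).restrict (p := l₀.toSubmodule) (q := l₀.toSubmodule)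
        (fun x hx => by simpa using l₀.lie_mem hYl hx) with hf
    have hIY : (Complex.I : ℂ) • Y ∈ l₀ := l₀.smul_mem _ hYl
    have hIYh : (Complex.I : ℂ) • Y ∈ h := h.smul_mem _ hYh
    have hsmul : ((LieAlgebra.ad ℂ g₀ ((Complex.I : ℂ) • Y)).restrict
        (p := l₀.toSubmodule) (q := l₀.toSubmodule)
        fun x hx => by simpa using l₀.lie_mem hIY hx) = (Complex.I : ℂ) • f := by
      ext x
      simp [LinearMap.restrict_apply, hf]
    have e1 : rhoEnd f = 0 := hrho0 Y hYh hYl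
    have e2 : rhoEnd ((Complex.I : ℂ) • f) = 0 := by
      rw [← hsmul]; exact hrho0 _ hIYh hIY
    exact isNilpotent_of_roots' f (roots_re_zero' f e1) (roots_re_zero' _ e2)
  -- the ideal s of l₀
  set L := (l₀ : LieSubalgebra ℂ g₀)
  let I : LieIdeal ℂ L :=
    { toSubmodule := (h.toSubmodule).comap (l₀.toSubmodule.subtype)
      lie_mem := by
        intro x m hm
        have : ((⁅x, m⁆ : L) : g₀) ∈ h := by
          rw [LieSubalgebra.coe_bracket]
          exact hideal _ _ hm
        exact this }
  -- every element of I is ad-nilpotent on L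
  have hadnil : ∀ x : L, (x : g₀) ∈ h → IsNilpotent (LieAlgebra.ad ℂ L x) := by
    intro x hx
    have hn := hnil x hx x.2
    have heq : LieAlgebra.ad ℂ L x = (LieAlgebra.ad ℂ g₀ (x : g₀)).restrict
        (p := l₀.toSubmodule) (q := l₀.toSubmodule)
        (fun z hz => by simpa using l₀.lie_mem x.2 hz) := by
      ext z
      rfl
    rw [heq]
    exact hn
  -- hence I is a nilpotent Lie algebra (Engel)
  have hInilp : LieRing.IsNilpotent I := by
    rw [LieAlgebra.isNilpotent_iff_forall (R := ℂ)]
    intro x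
    exact LieSubalgebra.isNilpotent_ad_of_isNilpotent_ad (I : LieSubalgebra ℂ L)
      (hadnil _ x.2)
  have hIsolv : LieAlgebra.IsSolvable I := inferInstance
  have hIcenter : I ≤ LieAlgebra.center ℂ L := by
    rw [← hred]
    exact (LieAlgebra.LieIdeal.solvable_iff_le_radical ℂ ↥L I).mp hIsolv
  -- part 1 : s is abelian
  have part1 : ∀ Y : g₀, Y ∈ h → Y ∈ l₀ → ∀ Z : g₀, Z ∈ h → Z ∈ l₀ → ⁅Y, Z⁆ = 0 := by
    intro Y hYh hYl Z hZh hZl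
    have hy : (⟨Y, hYl⟩ : L) ∈ I := hYh
    have hc := hIcenter hy
    rw [LieModule.mem_maxTrivSubmodule] at hc
    have := hc ⟨Z, hZl⟩
    have hcoe : (↑(⁅(⟨Z, hZl⟩ : L), (⟨Y, hYl⟩ : L)⁆ : L) : g₀) = ⁅Z, Y⁆ :=
      LieSubalgebra.coe_bracket _ _ _
    rw [this] at hcoe
    have : ⁅Z, Y⁆ = 0 := by simpa using hcoe.symm
    rw [← lie_skew, this, neg_zero]
  refine ⟨part1, ?_⟩
  -- the bracket of any two elements of h lies in u₀
  have hbrg : ∀ a b : g₀, a ∈ h → b ∈ h → ⁅a, b⁆ ∈ u₀ := by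
    intro a b ha hb
    have ha' : a ∈ (h.toSubmodule ⊓ l₀.toSubmodule) ⊔ (h.toSubmodule ⊓ u₀.toSubmodule) := by
      rw [← hdecomp]; exact ha
    have hb' : b ∈ (h.toSubmodule ⊓ l₀.toSubmodule) ⊔ (h.toSubmodule ⊓ u₀.toSubmodule) := by
      rw [← hdecomp]; exact hb
    obtain ⟨a₁, ha₁, a₂, ha₂, rfl⟩ := Submodule.mem_sup.mp ha'
    obtain ⟨b₁, hb₁, b₂, hb₂, rfl⟩ := Submodule.mem_sup.mp hb'
    rw [add_lie, lie_add, lie_add]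
    have h11 : ⁅a₁, b₁⁆ = 0 := part1 _ ha₁.1 ha₁.2 _ hb₁.1 hb₁.2
    have h12 : ⁅a₁, b₂⁆ ∈ u₀ := hu₀ideal _ _ hb₂.2
    have h21 : ⁅a₂, b₁⁆ ∈ u₀ := by
      rw [← lie_skew]
      exact u₀.toSubmodule.neg_mem (hu₀ideal _ _ ha₂.2)
    have h22 : ⁅a₂, b₂⁆ ∈ u₀ := hu₀ideal _ _ hb₂.2
    rw [h11]
    exact u₀.toSubmodule.add_mem
      (u₀.toSubmodule.add_mem (by simpa using u₀.zero_mem) h12)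
      (u₀.toSubmodule.add_mem h21 h22)
  -- the ideal J = h ∩ u₀ of h
  let J : LieIdeal ℂ h :=
    { toSubmodule := (u₀.toSubmodule).comap (h.toSubmodule.subtype)
      lie_mem := by
        intro x m hm
        have : ((⁅x, m⁆ : h) : g₀) ∈ u₀ := by
          rw [LieSubalgebra.coe_bracket]
          exact hu₀ideal _ _ hm
        exact this }
  -- J is solvable since it embeds into the nilpotent algebra u₀
  haveI := hu₀nilp
  have hJsolv : LieAlgebra.IsSolvable J := by
    let f : (↥J) →ₗ⁅ℂ⁆ ↥u₀ :=
      { toFun := fun x => ⟨((x : ↥h) : g₀), x.2⟩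
        map_add' := by intro x y; rfl
        map_smul' := by intro c x; rfl
        map_lie' := by intro x y; rfl }
    have hinj : Function.Injective f := by
      intro a b hab
      have h2 := congrArg Subtype.val hab
      exact Subtype.ext (Subtype.ext h2)
    exact hinj.lieAlgebra_isSolvable
  -- the derived series of h enters J after one step
  have hstep : LieAlgebra.derivedSeriesOfIdeal ℂ (↥h) 1 ⊤ ≤ J := by
    rw [LieAlgebra.derivedSeriesOfIdeal_succ, LieAlgebra.derivedSeriesOfIdeal_zero,
      LieSubmodule.lieIdeal_oper_eq_span, LieSubmodule.lieSpan_le]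
    rintro z ⟨x, y, rfl⟩
    show ((⁅(x : ↥h), (y : ↥h)⁆ : ↥h) : g₀) ∈ u₀
    rw [LieSubalgebra.coe_bracket]
    exact hbrg _ _ (x : ↥h).2 (y : ↥h).2
  obtain ⟨k, hk⟩ := (LieAlgebra.isSolvable_iff ℂ ↥J).mp hJsolv
  refine (LieAlgebra.isSolvable_iff ℂ ↥h).mpr ⟨k + 1, ?_⟩
  have hJbot : LieAlgebra.derivedSeriesOfIdeal ℂ (↥h) k J = ⊥ :=
    (LieIdeal.derivedSeries_eq_bot_iff J k).mp hk
  have : LieAlgebra.derivedSeries ℂ (↥h) (k + 1)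
      = LieAlgebra.derivedSeriesOfIdeal ℂ (↥h) k
        (LieAlgebra.derivedSeriesOfIdeal ℂ (↥h) 1 ⊤) := by
    rw [LieAlgebra.derivedSeries_def, LieAlgebra.derivedSeriesOfIdeal_add]
  rw [this, ← le_bot_iff, ← hJbot]
  exact LieAlgebra.derivedSeriesOfIdeal_mono hstep k
end
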